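/- Let à be a real m×m matrix with N(Ã) = N(Ãᵀ), let b ∈ ℝᵐ, let b|_{R(Ã)} denote the orthogonal projection of b onto R(Ã), and assume grade(Ã, b|_{R(Ã)}) = k. Then K_{k+1}(Ã, b|_{R(Ã)}) = Ã·K_k(Ã, b|_{R(Ã)}). -/

import Mathlib

open Matrix

/-- The `i`-th Krylov subspace `K_i(A, v) = span {v, Av, …, A^{i-1} v}`. -/
noncomputable def Krylov {m : ℕ} (A : Matrix (Fin m) (Fin m) ℝ)
    (v : EuclideanSpace ℝ (Fin m)) (i : ℕ) : Submodule ℝ (EuclideanSpace ℝ (Fin m)) :=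
  Submodule.span ℝ {w | ∃ j < i, w = (A ^ j).toEuclideanLin v}

/-- If `N(Ã) = N(Ãᵀ)` and `grade(Ã, b|_{R(Ã)}) = k`, then
`K_{k+1}(Ã, b|_{R(Ã)}) = Ã · K_k(Ã, b|_{R(Ã)})`. -/
theorem krylov_succ_eq_map_of_ker_eq_ker_transpose
    {m : ℕ} (A : Matrix (Fin m) (Fin m) ℝ) (b bR : EuclideanSpace ℝ (Fin m)) (k : ℕ)
    (hN : LinearMap.ker A.toEuclideanLin = LinearMap.ker Aᵀ.toEuclideanLin)
    -- `bR` is the orthogonal projection of `b` onto `R(Ã)`: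
    (hbR : bR ∈ LinearMap.range A.toEuclideanLin)
    (hperp : b - bR ∈ (LinearMap.range A.toEuclideanLin)ᗮ)
    -- `grade(Ã, b|_{R(Ã)}) = k`:
    (hgrade : Krylov A bR (k + 1) = Krylov A bR k)
    (hmin : ∀ j < k, Krylov A bR (j + 1) ≠ Krylov A bR j) :
    Krylov A bR (k + 1) = (Krylov A bR k).map A.toEuclideanLin := by
  classical
  have hmul : ∀ (M N : Matrix (Fin m) (Fin m) ℝ) (v : EuclideanSpace ℝ (Fin m)),
      (M * N).toEuclideanLin v = M.toEuclideanLin (N.toEuclideanLin v) := by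
    intro M N v
    simp [Matrix.toEuclideanLin_apply, Matrix.mulVec_mulVec]
  -- Every Krylov subspace is contained in the range of A
  have hKrange : ∀ i, Krylov A bR i ≤ LinearMap.range A.toEuclideanLin := by
    intro i
    rw [Krylov, Submodule.span_le]
    rintro w ⟨j, hj, rfl⟩
    obtain ⟨z, hz⟩ := hbR
    refine ⟨(A ^ j).toEuclideanLin z, ?_⟩
    rw [← hmul, ((Commute.refl A).pow_right j).eq, hmul, hz]
  -- The image of K_k is contained in K_{k+1}
  have hmap_le : (Krylov A bR k).map A.toEuclideanLin ≤ Krylov A bR (k + 1) := by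
    rw [Submodule.map_le_iff_le_comap, Krylov, Submodule.span_le]
    rintro w ⟨j, hj, rfl⟩
    show A.toEuclideanLin ((A ^ j).toEuclideanLin bR) ∈ Krylov A bR (k + 1)
    rw [← hmul, ← pow_succ']
    exact Submodule.subset_span ⟨j + 1, by omega, rfl⟩
  -- A is injective on its range
  have hinj : ∀ x ∈ LinearMap.range A.toEuclideanLin, A.toEuclideanLin x = 0 → x = 0 := by
    intro x hx h0
    obtain ⟨y, rfl⟩ := hx
    have hker : Aᵀ.toEuclideanLin (A.toEuclideanLin y) = 0 := by
      have : A.toEuclideanLin y ∈ LinearMap.ker Aᵀ.toEuclideanLin := hN ▸ h0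
      exact this
    have hadj : Aᵀ.toEuclideanLin = LinearMap.adjoint A.toEuclideanLin := by
      rw [← Matrix.conjTranspose_eq_transpose_of_trivial]
      exact Matrix.toEuclideanLin_conjTranspose_eq_adjoint A
    have hzero : (inner ℝ (A.toEuclideanLin y) (A.toEuclideanLin y) : ℝ) = 0 := by
      rw [← LinearMap.adjoint_inner_left, ← hadj, hker, inner_zero_left]
    exact inner_self_eq_zero.mp hzero
  -- The restriction of A to K_k is injective
  set f := A.toEuclideanLin.comp (Krylov A bR k).subtype with hf
  have hfinj : Function.Injective f := by
    rw [← LinearMap.ker_eq_bot, LinearMap.ker_eq_bot']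
    intro x hx0
    have : (x : EuclideanSpace ℝ (Fin m)) = 0 :=
      hinj x (hKrange k x.2) hx0
    exact Subtype.ext this
  have hrange : LinearMap.range f = (Krylov A bR k).map A.toEuclideanLin := by
    rw [hf, LinearMap.range_comp, Submodule.range_subtype]
  have hfr : Module.finrank ℝ ((Krylov A bR k).map A.toEuclideanLin)
      = Module.finrank ℝ (Krylov A bR k) := by
    rw [← hrange, LinearMap.finrank_range_of_inj hfinj]
  have hmap_le' : (Krylov A bR k).map A.toEuclideanLin ≤ Krylov A bR k := hgrade ▸ hmap_le
  have hEq : (Krylov A bR k).map A.toEuclideanLin = Krylov A bR k :=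
    Submodule.eq_of_le_of_finrank_le hmap_le' (le_of_eq hfr.symm)
  rw [hgrade, hEq]
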